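/- Let A be an n×n real matrix such that D(A) belongs to the class 𝒟 and D(A) is strongly connected. Then the group inverse A^# exists if and only if Δ_A ≠ 0. -/

import Mathlib

open Matrix

/-- Adjacency in a digraph given by relation `G`: a 2-cycle between distinct `i` and `j`. -/
def Adjd {n : ℕ} (G : Fin n → Fin n → Prop) (i j : Fin n) : Prop :=
  i ≠ j ∧ G i j ∧ G j i

/-- `G` is a simple symmetric digraph: no loops and edges come in both directions. -/
def IsSSD {n : ℕ} (G : Fin n → Fin n → Prop) : Prop :=
  (∀ i, ¬ G i i) ∧ ∀ i j, G i j → G j i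

/-- A vertex is pendant if it is incident to exactly one 2-cycle. -/
def Pendant {n : ℕ} (G : Fin n → Fin n → Prop) (i : Fin n) : Prop :=
  ∃! j, Adjd G i j

/-- The class 𝒟: simple symmetric digraphs in which every non-pendant vertex is
adjacent to at least one pendant vertex. -/
def InClassD {n : ℕ} (G : Fin n → Fin n → Prop) : Prop :=
  IsSSD G ∧ ∀ i, ¬ Pendant G i → ∃ j, Adjd G i j ∧ Pendant G j

/-- Strong connectivity: a directed path from every vertex to every other vertex. -/
def StronglyConnected {n : ℕ} (G : Fin n → Fin n → Prop) : Prop :=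
  ∀ i j : Fin n, Relation.ReflTransGen G i j

/-- An unordered pair `e` is a 2-cycle of `G`. -/
def IsEdge {n : ℕ} (G : Fin n → Fin n → Prop) (e : Sym2 (Fin n)) : Prop :=
  ∃ i j, e = s(i, j) ∧ Adjd G i j

/-- A matching: a set of pairwise vertex-disjoint 2-cycles. -/
def IsMatching {n : ℕ} (G : Fin n → Fin n → Prop) (M : Finset (Sym2 (Fin n))) : Prop :=
  (∀ e ∈ M, IsEdge G e) ∧
  ∀ e ∈ M, ∀ f ∈ M, e ≠ f → ∀ v : Fin n, v ∈ e → v ∉ f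

/-- A maximum matching: a matching of maximum cardinality. -/
def IsMaxMatching {n : ℕ} (G : Fin n → Fin n → Prop) (M : Finset (Sym2 (Fin n))) : Prop :=
  IsMatching G M ∧ ∀ M', IsMatching G M' → M'.card ≤ M.card

/-- A cycle chain, recorded by its list of (distinct) vertices `i₁, …, i_{m+1}`. -/
def IsCycleChain {n : ℕ} (G : Fin n → Fin n → Prop) (c : List (Fin n)) : Prop :=
  c.Nodup ∧ 2 ≤ c.length ∧ c.Chain' (Adjd G)

/-- A cycle chain from `i` to `j`. -/
def IsCycleChainBtw {n : ℕ} (G : Fin n → Fin n → Prop) (i j : Fin n) (c : List (Fin n)) : Prop :=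
  IsCycleChain G c ∧ c.head? = some i ∧ c.getLast? = some j

/-- The list of 2-cycles of a cycle chain. -/
def chainEdges {n : ℕ} (c : List (Fin n)) : List (Sym2 (Fin n)) :=
  List.zipWith (fun a b => s(a, b)) c c.tail

/-- The cycle chain `c` is alternating with respect to `M`: its 2-cycles are alternately
in `M` and outside `M`, with the first and last 2-cycle in `M` (so its length is odd). -/
def IsAltChain {n : ℕ} (M : Finset (Sym2 (Fin n))) (c : List (Fin n)) : Prop :=
  Odd (chainEdges c).length ∧
  ∀ k (h : k < (chainEdges c).length), ((chainEdges c).get ⟨k, h⟩ ∈ M ↔ Even k)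

/-- The digraph of a square matrix: edge `(i,j)` iff `A i j ≠ 0`. -/
def DA {n : ℕ} (A : Matrix (Fin n) (Fin n) ℝ) : Fin n → Fin n → Prop :=
  fun i j => A i j ≠ 0

/-- The cycle product `a_{ij} a_{ji}` of a 2-cycle. -/
def cycProd {n : ℕ} (A : Matrix (Fin n) (Fin n) ℝ) (e : Sym2 (Fin n)) : ℝ :=
  Sym2.lift ⟨fun i j => A i j * A j i, fun i j => mul_comm _ _⟩ e

/-- The matching product η(M) of a matching `M`. -/
noncomputable def matchProd {n : ℕ} (A : Matrix (Fin n) (Fin n) ℝ)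
    (M : Finset (Sym2 (Fin n))) : ℝ :=
  ∏ e ∈ M, cycProd A e

/-- The (finite) collection of all maximum matchings of `D(A)`. -/
noncomputable def maxMatchings {n : ℕ} (A : Matrix (Fin n) (Fin n) ℝ) :
    Finset (Finset (Sym2 (Fin n))) :=
  {M | IsMaxMatching (DA A) M}.toFinite.toFinset

/-- Δ_A: the sum of the matching products over all maximum matchings of `D(A)`. -/
noncomputable def Delta {n : ℕ} (A : Matrix (Fin n) (Fin n) ℝ) : ℝ :=
  ∑ M ∈ maxMatchings A, matchProd A M

/-- 𝕄(i,j): maximum matchings with respect to which some cycle chain from `i` to `j`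
is an alternating cycle chain. -/
def MMset {n : ℕ} (A : Matrix (Fin n) (Fin n) ℝ) (i j : Fin n) :
    Set (Finset (Sym2 (Fin n))) :=
  {M | IsMaxMatching (DA A) M ∧ ∃ c, IsCycleChainBtw (DA A) i j c ∧ IsAltChain M c}

/-- `i` and `j` are maximally matchable: 𝕄(i,j) ≠ ∅. -/
def MaxMatchable {n : ℕ} (A : Matrix (Fin n) (Fin n) ℝ) (i j : Fin n) : Prop :=
  (MMset A i j).Nonempty

open scoped Classical in
/-- The (unique) alternating cycle chain from `i` to `j`, when it exists. -/
noncomputable def theChain {n : ℕ} (A : Matrix (Fin n) (Fin n) ℝ) (i j : Fin n) :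
    List (Fin n) :=
  if h : ∃ c, IsCycleChainBtw (DA A) i j c ∧ ∃ M ∈ MMset A i j, IsAltChain M c
  then h.choose else []

/-- The path product along a cycle chain: `a_{i₁ i₂} a_{i₂ i₃} ⋯ a_{i_m i_{m+1}}`. -/
def pathProd {n : ℕ} (A : Matrix (Fin n) (Fin n) ℝ) (c : List (Fin n)) : ℝ :=
  (List.zipWith (fun a b => A a b) c c.tail).prod

open scoped Classical in
/-- β_{ij} = (−1)^{(m−1)/2} P_m(i,j) for maximally matchable `i, j`, and `0` otherwise. -/
noncomputable def beta {n : ℕ} (A : Matrix (Fin n) (Fin n) ℝ) (i j : Fin n) : ℝ :=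
  if MaxMatchable A i j then
    (-1 : ℝ) ^ (((theChain A i j).length - 2) / 2) * pathProd A (theChain A i j)
  else 0

/-- β̄_{i,j}(M): product of the cycle products of the 2-cycles of `M` not contained in
the alternating cycle chain from `i` to `j`. -/
noncomputable def betaBar {n : ℕ} (A : Matrix (Fin n) (Fin n) ℝ) (i j : Fin n)
    (M : Finset (Sym2 (Fin n))) : ℝ :=
  ∏ e ∈ M.filter (fun e => e ∉ chainEdges (theChain A i j)), cycProd A e

/-- μ_{ij} = β_{ij} · Σ_{M ∈ 𝕄(i,j)} β̄_{i,j}(M). -/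
noncomputable def mu {n : ℕ} (A : Matrix (Fin n) (Fin n) ℝ) (i j : Fin n) : ℝ :=
  beta A i j * ∑ M ∈ (MMset A i j).toFinite.toFinset, betaBar A i j M

/-- `X` is a group inverse of `A`. -/
def IsGroupInverse {n : ℕ} (A X : Matrix (Fin n) (Fin n) ℝ) : Prop :=
  A * X * A = A ∧ X * A * X = X ∧ A * X = X * A

/-- A tree digraph: strongly connected and all of its cycles have length 2. -/
def IsTreeDigraph {n : ℕ} (G : Fin n → Fin n → Prop) : Prop :=
  StronglyConnected G ∧
  ∀ (a : Fin n) (l : List (Fin n)), (a :: l).Nodup → List.Chain G a l →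
    G ((a :: l).getLast (List.cons_ne_nil a l)) a → (a :: l).length = 2

/-- A star tree digraph: a tree digraph with a center adjacent to every other vertex,
every other vertex being adjacent only to the center. -/
def IsStarTree {n : ℕ} (G : Fin n → Fin n → Prop) : Prop :=
  IsTreeDigraph G ∧
  ∃ c : Fin n, (∀ j, j ≠ c → Adjd G c j) ∧ ∀ i j, Adjd G i j → i = c ∨ j = c

/-- A corona digraph: a simple symmetric digraph in which each non-pendant vertex is
adjacent to exactly one pendant vertex. -/
def IsCorona {n : ℕ} (G : Fin n → Fin n → Prop) : Prop :=
  IsSSD G ∧ ∀ i, ¬ Pendant G i → ∃! j, Adjd G i j ∧ Pendant G j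

/-- 𝕄(i): the maximum matchings in which vertex `i` is matched. -/
noncomputable def MMi {n : ℕ} (A : Matrix (Fin n) (Fin n) ℝ) (i : Fin n) :
    Finset (Finset (Sym2 (Fin n))) :=
  {M | IsMaxMatching (DA A) M ∧ ∃ e ∈ M, i ∈ e}.toFinite.toFinset


theorem gi_iff_ker {n : ℕ} (A : Matrix (Fin n) (Fin n) ℝ) :
    (∃ X, IsGroupInverse A X) ↔ ∀ x : Fin n → ℝ, A.mulVec (A.mulVec x) = 0 → A.mulVec x = 0 := by
  constructor
  · rintro ⟨X, h1, h2, h3⟩ x hx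
    have key : A * X * A = X * (A * A) := by rw [h3, mul_assoc]
    have h4 : A *ᵥ x = (A * X * A) *ᵥ x := by rw [h1]
    rw [h4, key, ← Matrix.mulVec_mulVec, ← Matrix.mulVec_mulVec, hx, Matrix.mulVec_zero]
  · intro h
    set T := Matrix.toLin' A with hT
    have hTapp : ∀ x, T x = A.mulVec x := fun x => Matrix.toLin'_apply A x
    have hdisj : Disjoint (LinearMap.range T) (LinearMap.ker T) := by
      rw [Submodule.disjoint_def]
      rintro y ⟨x, rfl⟩ hy
      rw [LinearMap.mem_ker, hTapp, hTapp] at *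
      exact h x (by rw [← hTapp, ← hTapp]; exact hy)
    have hcompl : IsCompl (LinearMap.range T) (LinearMap.ker T) := by
      refine ⟨hdisj, ?_⟩
      rw [codisjoint_iff]
      apply Submodule.eq_top_of_finrank_eq
      have h1 := Submodule.finrank_sup_add_finrank_inf_eq (LinearMap.range T) (LinearMap.ker T)
      rw [disjoint_iff.mp hdisj] at h1
      simp only [finrank_bot, add_zero] at h1
      rw [h1, LinearMap.finrank_range_add_finrank_ker]
    have hmaps : ∀ x ∈ LinearMap.range T, T x ∈ LinearMap.range T :=
      fun x _ => LinearMap.mem_range_self T x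
    set Tr : LinearMap.range T →ₗ[ℝ] LinearMap.range T := T.restrict hmaps with hTr
    have hTrapp : ∀ u : LinearMap.range T, (Tr u : Fin n → ℝ) = T u := fun u => rfl
    have hinj : Function.Injective Tr := by
      intro u v huv
      have h1 : T u.1 = T v.1 := by rw [← hTrapp, ← hTrapp, huv]
      have h2 : (u.1 - v.1) ∈ LinearMap.ker T := by
        rw [LinearMap.mem_ker, map_sub, h1, sub_self]
      have h3 : (u.1 - v.1) ∈ LinearMap.range T := Submodule.sub_mem _ u.2 v.2
      have := Submodule.disjoint_def.mp hdisj _ h3 h2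
      exact Subtype.ext (sub_eq_zero.mp this)
    have hsurj := (LinearMap.injective_iff_surjective).mp hinj
    set e := LinearEquiv.ofBijective Tr ⟨hinj, hsurj⟩ with he
    set pr := (LinearMap.range T).linearProjOfIsCompl (LinearMap.ker T) hcompl with hpr
    set Xl : (Fin n → ℝ) →ₗ[ℝ] (Fin n → ℝ) :=
      (LinearMap.range T).subtype ∘ₗ (e.symm : LinearMap.range T →ₗ[ℝ] LinearMap.range T) ∘ₗ pr
      with hXl
    have hXlapp : ∀ x, Xl x = (e.symm (pr x) : Fin n → ℝ) := fun x => rfl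
    -- key fact 1 : T (Xl x) = pr x
    have fact1 : ∀ x, T (Xl x) = (pr x : Fin n → ℝ) := by
      intro x
      rw [hXlapp]
      have : T ((e.symm (pr x) : LinearMap.range T) : Fin n → ℝ)
          = (Tr (e.symm (pr x)) : Fin n → ℝ) := rfl
      rw [this]
      have : Tr (e.symm (pr x)) = e (e.symm (pr x)) := rfl
      rw [this, LinearEquiv.apply_symm_apply]
    -- key fact 2 : T x = T (pr x)
    have fact2 : ∀ x, T ((pr x : Fin n → ℝ)) = T x := by
      intro x
      have hsum := Submodule.projection_add_projection_eq_self hcompl x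
      have hker : ((LinearMap.ker T).linearProjOfIsCompl (LinearMap.range T) hcompl.symm x : Fin n → ℝ)
          ∈ LinearMap.ker T := Submodule.coe_mem _
      rw [LinearMap.mem_ker] at hker
      calc T ((pr x : Fin n → ℝ))
          = T ((pr x : Fin n → ℝ)) + T _ := by rw [hker, add_zero]
        _ = T x := by rw [← map_add]; exact congrArg T hsum
    refine ⟨LinearMap.toMatrix' Xl, ?_, ?_, ?_⟩
    · apply Matrix.toLin'.injective
      rw [Matrix.toLin'_mul, Matrix.toLin'_mul, Matrix.toLin'_toMatrix', ← hT]
      refine LinearMap.ext fun x => ?_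
      simp only [LinearMap.comp_apply]
      rw [fact1 (T x)]
      have : pr (T x) = ⟨T x, LinearMap.mem_range_self T x⟩ :=
        Submodule.linearProjOfIsCompl_apply_left hcompl ⟨T x, LinearMap.mem_range_self T x⟩
      rw [this]
    · apply Matrix.toLin'.injective
      rw [Matrix.toLin'_mul, Matrix.toLin'_mul, Matrix.toLin'_toMatrix', ← hT]
      refine LinearMap.ext fun x => ?_
      simp only [LinearMap.comp_apply]
      rw [fact1 x]
      rw [hXlapp, hXlapp]
      congr 1
      congr 1
      exact Submodule.linearProjOfIsCompl_apply_left hcompl (pr x)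
    · apply Matrix.toLin'.injective
      rw [Matrix.toLin'_mul, Matrix.toLin'_mul, Matrix.toLin'_toMatrix', ← hT]
      refine LinearMap.ext fun x => ?_
      simp only [LinearMap.comp_apply]
      rw [fact1 x, hXlapp]
      have hpreq : pr (T x) = e (pr x) := by
        have h1 : pr (T x) = ⟨T x, LinearMap.mem_range_self T x⟩ :=
          Submodule.linearProjOfIsCompl_apply_left hcompl ⟨T x, LinearMap.mem_range_self T x⟩
        rw [h1]
        apply Subtype.ext
        have : (e (pr x) : Fin n → ℝ) = (Tr (pr x) : Fin n → ℝ) := rfl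
        rw [this, hTrapp, fact2]
      rw [hpreq, LinearEquiv.symm_apply_apply]

section MainProofA
open scoped Classical

variable {n : ℕ}

private lemma adjd_symm {G : Fin n → Fin n → Prop} {i j : Fin n} (h : Adjd G i j) :
    Adjd G j i := ⟨h.1.symm, h.2.2, h.2.1⟩

private lemma pend_unique {G : Fin n → Fin n → Prop} {q a b : Fin n} (hq : Pendant G q)
    (ha : Adjd G q a) (hb : Adjd G q b) : a = b := by
  obtain ⟨w, -, hw⟩ := hq
  rw [hw a ha, hw b hb]

noncomputable def pendNbrs (A : Matrix (Fin n) (Fin n) ℝ) (v : Fin n) : Finset (Fin n) :=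
  Finset.univ.filter (fun q => Pendant (DA A) q ∧ Adjd (DA A) v q)

noncomputable def wgt (A : Matrix (Fin n) (Fin n) ℝ) (v : Fin n) : ℝ :=
  ∑ q ∈ pendNbrs A v, A v q * A q v

noncomputable def NPs (A : Matrix (Fin n) (Fin n) ℝ) : Finset (Fin n) :=
  Finset.univ.filter (fun v => ¬ Pendant (DA A) v)

private lemma mem_NPs {A : Matrix (Fin n) (Fin n) ℝ} {v : Fin n} :
    v ∈ NPs A ↔ ¬ Pendant (DA A) v := by simp [NPs]

private lemma mem_pendNbrs {A : Matrix (Fin n) (Fin n) ℝ} {v q : Fin n} :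
    q ∈ pendNbrs A v ↔ Pendant (DA A) q ∧ Adjd (DA A) v q := by simp [pendNbrs]

private lemma adj_of_ne_zero {A : Matrix (Fin n) (Fin n) ℝ} (hS : IsSSD (DA A)) {i j : Fin n}
    (h : A i j ≠ 0) : Adjd (DA A) i j := by
  have hij : i ≠ j := by rintro rfl; exact hS.1 i h
  exact ⟨hij, h, hS.2 i j h⟩

private lemma adj_ne_zero {A : Matrix (Fin n) (Fin n) ℝ} {i j : Fin n}
    (h : Adjd (DA A) i j) : A i j ≠ 0 := h.2.1

private lemma mulVec_apply (A : Matrix (Fin n) (Fin n) ℝ) (x : Fin n → ℝ) (i : Fin n) :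
    (A *ᵥ x) i = ∑ j, A i j * x j := rfl

private lemma pend_row {A : Matrix (Fin n) (Fin n) ℝ} (hS : IsSSD (DA A)) {q v : Fin n}
    (hq : Pendant (DA A) q) (hv : Adjd (DA A) q v) (x : Fin n → ℝ) :
    (A *ᵥ x) q = A q v * x v := by
  rw [mulVec_apply]
  apply Finset.sum_eq_single v
  · intro j _ hj
    rcases eq_or_ne (A q j) 0 with h | h
    · rw [h, zero_mul]
    · exact absurd (pend_unique hq (adj_of_ne_zero hS h) hv) hj
  · intro h; exact absurd (Finset.mem_univ v) h

theorem kerSq_of_wgt (A : Matrix (Fin n) (Fin n) ℝ) (hD : InClassD (DA A))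
    (hw : ∀ v ∈ NPs A, wgt A v ≠ 0) :
    ∀ x, A *ᵥ (A *ᵥ x) = 0 → A *ᵥ x = 0 := by
  intro x hx
  obtain ⟨hS, hcl⟩ := hD
  set y := A *ᵥ x with hy
  have step1 : ∀ q v, Pendant (DA A) q → Adjd (DA A) q v → y v = 0 := by
    intro q v hq hv
    have h0 : (A *ᵥ y) q = 0 := by rw [hy, hx]; rfl
    rw [pend_row hS hq hv] at h0
    exact (mul_eq_zero.mp h0).resolve_left (adj_ne_zero hv)
  have step1' : ∀ v, ¬ Pendant (DA A) v → y v = 0 := by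
    intro v hv
    obtain ⟨q, hvq, hq⟩ := hcl v hv
    exact step1 q v hq (adjd_symm hvq)
  have step2 : ∀ v, ¬ Pendant (DA A) v → x v = 0 := by
    intro v hv
    have h0 : (A *ᵥ y) v = 0 := by rw [hy, hx]; rfl
    rw [mulVec_apply] at h0
    have hsum : ∑ j, A v j * y j = ∑ j ∈ pendNbrs A v, A v j * y j := by
      symm
      apply Finset.sum_subset (Finset.subset_univ _)
      intro j _ hj
      rcases eq_or_ne (A v j) 0 with h | h
      · rw [h, zero_mul]
      · have hadj := adj_of_ne_zero hS h
        have hnp : ¬ Pendant (DA A) j := fun hp => hj (mem_pendNbrs.mpr ⟨hp, hadj⟩)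
        rw [step1' j hnp, mul_zero]
    rw [hsum] at h0
    have hterm : ∀ j ∈ pendNbrs A v, A v j * y j = (A v j * A j v) * x v := by
      intro j hj
      obtain ⟨hjp, hjadj⟩ := mem_pendNbrs.mp hj
      rw [hy, pend_row hS hjp (adjd_symm hjadj), mul_assoc]
    rw [Finset.sum_congr rfl hterm, ← Finset.sum_mul] at h0
    exact (mul_eq_zero.mp h0).resolve_left (hw v (mem_NPs.mpr hv))
  funext i
  rw [Pi.zero_apply]
  show y i = 0
  by_cases hi : Pendant (DA A) i
  · obtain ⟨v, hv, -⟩ := id hi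
    by_cases hvp : Pendant (DA A) v
    · exact step1 v i hvp (adjd_symm hv)
    · rw [hy, pend_row hS hi hv, step2 v hvp, mul_zero]
  · exact step1' i hi

theorem exists_bad_vec (A : Matrix (Fin n) (Fin n) ℝ) (hD : InClassD (DA A))
    {v₀ : Fin n} (hv₀ : ¬ Pendant (DA A) v₀) (hw : wgt A v₀ = 0) :
    ∃ u, A *ᵥ (A *ᵥ u) = 0 ∧ A *ᵥ u ≠ 0 := by
  obtain ⟨hS, hcl⟩ := hD
  set q : Fin n → Fin n := fun i =>
    if h : ∃ j, Adjd (DA A) i j ∧ Pendant (DA A) j then h.choose else i with hqdef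
  have hq : ∀ i, ¬ Pendant (DA A) i → Adjd (DA A) i (q i) ∧ Pendant (DA A) (q i) := by
    intro i hi
    have h := hcl i hi
    simp only [hqdef, dif_pos h]
    exact h.choose_spec
  set y : Fin n → ℝ := fun i => if Pendant (DA A) i then A i v₀ else 0 with hydef
  set u : Fin n → ℝ :=
    Pi.single v₀ 1 - ∑ i ∈ NPs A, (A i v₀ / A i (q i)) • (Pi.single (q i) (1:ℝ) : Fin n → ℝ) with hudef
  -- A *ᵥ u = y
  have key : A *ᵥ u = y := by
    have h1 : A *ᵥ u = A *ᵥ Pi.single v₀ 1 -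
        ∑ i ∈ NPs A, (A i v₀ / A i (q i)) • (A *ᵥ Pi.single (q i) 1) := by
      rw [hudef, ← A.mulVecLin_apply, map_sub, map_sum]
      simp only [_root_.map_smul, A.mulVecLin_apply]
      simp only [Matrix.mulVec_smul]
    funext k
    rw [h1]
    simp only [Pi.sub_apply, Finset.sum_apply, Pi.smul_apply, smul_eq_mul,
      Matrix.mulVec_single_one, Matrix.col_apply, mul_one]
    by_cases hk : Pendant (DA A) k
    · have hzero : ∀ i ∈ NPs A, A i v₀ / A i (q i) * A k (q i) = 0 := by
        intro i hi
        have hinp := mem_NPs.mp hi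
        rcases eq_or_ne (A k (q i)) 0 with h | h
        · rw [h, mul_zero]
        · exfalso
          have hadj := adj_of_ne_zero hS h
          have : k = i := pend_unique (hq i hinp).2 (adjd_symm hadj) (adjd_symm (hq i hinp).1)
          exact hinp (this ▸ hk)
      rw [Finset.sum_eq_zero hzero, sub_zero, hydef]
      simp [hk]
    · have hsum : ∑ i ∈ NPs A, A i v₀ / A i (q i) * A k (q i) = A k v₀ := by
        rw [Finset.sum_eq_single k]
        · rw [div_mul_cancel₀ _ (adj_ne_zero (hq k hk).1)]
        · intro i hi hik
          have hinp := mem_NPs.mp hi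
          rcases eq_or_ne (A k (q i)) 0 with h | h
          · rw [h, mul_zero]
          · exfalso
            have hadj := adj_of_ne_zero hS h
            exact hik (pend_unique (hq i hinp).2 (adjd_symm hadj) (adjd_symm (hq i hinp).1)).symm
        · intro h; exact absurd (mem_NPs.mpr hk) h
      rw [hsum, hydef]
      simp [hk]
  have hynz : y ≠ 0 := by
    intro h0
    have h1 := congrFun h0 (q v₀)
    rw [hydef, Pi.zero_apply] at h1
    simp only [(hq v₀ hv₀).2, if_true] at h1
    exact adj_ne_zero (adjd_symm (hq v₀ hv₀).1) h1
  have hAy : A *ᵥ y = 0 := by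
    funext k
    rw [_root_.mulVec_apply, Pi.zero_apply]
    have hterm : ∀ j : Fin n, A k j * y j = if Pendant (DA A) j then A k j * A j v₀ else 0 := by
      intro j
      rw [hydef]
      by_cases hj : Pendant (DA A) j <;> simp [hj]
    rw [Finset.sum_congr rfl (fun j _ => hterm j), ← Finset.sum_filter]
    by_cases hkv : k = v₀
    · subst hkv
      have hsub : pendNbrs A k ⊆ Finset.univ.filter (fun j => Pendant (DA A) j) := by
        intro j hj
        simp only [Finset.mem_filter, Finset.mem_univ, true_and]
        exact (mem_pendNbrs.mp hj).1
      rw [← Finset.sum_subset hsub]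
      · exact hw
      · intro j hj hj2
        have hjp : Pendant (DA A) j := (Finset.mem_filter.mp hj).2
        rcases eq_or_ne (A k j) 0 with h | h
        · rw [h, zero_mul]
        · exact absurd (mem_pendNbrs.mpr ⟨hjp, adj_of_ne_zero hS h⟩) hj2
    · apply Finset.sum_eq_zero
      intro j hj
      have hjp : Pendant (DA A) j := (Finset.mem_filter.mp hj).2
      rcases eq_or_ne (A k j) 0 with h | h
      · rw [h, zero_mul]
      · rcases eq_or_ne (A j v₀) 0 with h2 | h2
        · rw [h2, mul_zero]
        · exact absurd (pend_unique hjp (adjd_symm (adj_of_ne_zero hS h))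
            (adj_of_ne_zero hS h2)) (by exact fun hh => hkv hh)
  exact ⟨u, by rw [key, hAy], by rw [key]; exact hynz⟩

end MainProofA

section MainProofC
open scoped Classical

variable {n : ℕ}

noncomputable def ppE (A : Matrix (Fin n) (Fin n) ℝ) : Finset (Sym2 (Fin n)) :=
  Finset.univ.filter (fun e => IsEdge (DA A) e ∧ ∀ v ∈ e, Pendant (DA A) v)

private lemma mem_ppE {A : Matrix (Fin n) (Fin n) ℝ} {e : Sym2 (Fin n)} :
    e ∈ ppE A ↔ IsEdge (DA A) e ∧ ∀ v ∈ e, Pendant (DA A) v := by simp [ppE]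

private lemma edge_decomp {G : Fin n → Fin n → Prop} {e : Sym2 (Fin n)} (he : IsEdge G e)
    {u : Fin n} (hu : u ∈ e) : ∃ w, e = s(u, w) ∧ Adjd G u w := by
  obtain ⟨i, j, rfl, hij⟩ := he
  rcases Sym2.mem_iff.mp hu with rfl | rfl
  · exact ⟨j, rfl, hij⟩
  · exact ⟨i, Sym2.eq_swap.symm, adjd_symm hij⟩

private lemma matching_unique {G : Fin n → Fin n → Prop} {M : Finset (Sym2 (Fin n))}
    (hM : IsMatching G M) {e f : Sym2 (Fin n)} (he : e ∈ M) (hf : f ∈ M) {v : Fin n}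
    (hv : v ∈ e) (hv' : v ∈ f) : e = f := by
  by_contra h
  exact hM.2 e he f hf h v hv hv'

private lemma cycProd_mk (A : Matrix (Fin n) (Fin n) ℝ) (i j : Fin n) :
    cycProd A s(i, j) = A i j * A j i := by
  simp [cycProd]

private lemma insert_matching {G : Fin n → Fin n → Prop} {M : Finset (Sym2 (Fin n))}
    {e : Sym2 (Fin n)} (hM : IsMatching G M) (he : IsEdge G e)
    (hdisj : ∀ f ∈ M, ∀ v ∈ e, v ∉ f) : IsMatching G (insert e M) := by
  constructor
  · intro f hf
    rcases Finset.mem_insert.mp hf with rfl | hf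
    · exact he
    · exact hM.1 f hf
  · intro f hf g hg hfg u huf hug
    rcases Finset.mem_insert.mp hf with hfe | hf
    · rcases Finset.mem_insert.mp hg with hge | hg
      · exact hfg (hfe.trans hge.symm)
      · exact hdisj g hg u (hfe ▸ huf) hug
    · rcases Finset.mem_insert.mp hg with hge | hg
      · exact hdisj f hf u (hge ▸ hug) huf
      · exact hM.2 f hf g hg hfg u huf hug

private lemma not_max_insert {G : Fin n → Fin n → Prop} {M : Finset (Sym2 (Fin n))}
    {e : Sym2 (Fin n)} (hM : IsMaxMatching G M) (hne : e ∉ M)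
    (hM' : IsMatching G (insert e M)) : False := by
  have h := hM.2 _ hM'
  rw [Finset.card_insert_of_notMem hne] at h
  omega

private lemma card_le_bound (A : Matrix (Fin n) (Fin n) ℝ) {M : Finset (Sym2 (Fin n))}
    (hM : IsMatching (DA A) M) : M.card ≤ (NPs A).card + (ppE A).card := by
  have hsplit := Finset.card_filter_add_card_filter_not
    (s := M) (p := fun e => ∃ v ∈ e, ¬ Pendant (DA A) v)
  set M1 := M.filter (fun e => ∃ v ∈ e, ¬ Pendant (DA A) v) with hM1
  set M2 := M.filter (fun e => ¬ ∃ v ∈ e, ¬ Pendant (DA A) v) with hM2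
  have h2 : M2.card ≤ (ppE A).card := by
    apply Finset.card_le_card
    intro e he
    obtain ⟨heM, hne⟩ := Finset.mem_filter.mp he
    push_neg at hne
    exact mem_ppE.mpr ⟨hM.1 e heM, hne⟩
  have h1 : M1.card ≤ (NPs A).card := by
    rcases Finset.eq_empty_or_nonempty M1 with h | ⟨e₀, he₀⟩
    · simp [h]
    · obtain ⟨-, v₀, hv₀, -⟩ := Finset.mem_filter.mp he₀
      apply Finset.card_le_card_of_injOn
        (fun e => if h : ∃ v ∈ e, ¬ Pendant (DA A) v then h.choose else v₀)
      · intro e he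
        obtain ⟨-, hne⟩ := Finset.mem_filter.mp he
        beta_reduce
        rw [dif_pos hne]
        exact mem_NPs.mpr hne.choose_spec.2
      · intro e he f hf hef
        simp only [Finset.mem_coe] at he hf
        obtain ⟨heM, hne⟩ := Finset.mem_filter.mp he
        obtain ⟨hfM, hnf⟩ := Finset.mem_filter.mp hf
        simp only [dif_pos hne, dif_pos hnf] at hef
        exact matching_unique hM heM hfM hne.choose_spec.1 (hef ▸ hnf.choose_spec.1)
  omega

private lemma np_matched (A : Matrix (Fin n) (Fin n) ℝ) (hD : InClassD (DA A))
    {M : Finset (Sym2 (Fin n))} (hM : IsMaxMatching (DA A) M)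
    {v : Fin n} (hv : ¬ Pendant (DA A) v) : ∃ e ∈ M, v ∈ e := by
  by_contra hcon
  push_neg at hcon
  obtain ⟨p, hvp, hp⟩ := hD.2 v hv
  have hpun : ∀ e ∈ M, p ∉ e := by
    intro e he hpe
    obtain ⟨w, rfl, hw⟩ := edge_decomp (hM.1.1 e he) hpe
    have hwv : w = v := pend_unique hp hw (adjd_symm hvp)
    rw [hwv] at he
    exact hcon _ he (Sym2.mem_mk_right p v)
  refine not_max_insert hM (fun h => hcon _ h (Sym2.mem_mk_left v p))
    (insert_matching hM.1 ⟨v, p, rfl, hvp⟩ ?_)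
  intro f hf u hu
  rcases Sym2.mem_iff.mp hu with rfl | rfl
  · exact hcon f hf
  · exact hpun f hf

private lemma edge_has_pendant (A : Matrix (Fin n) (Fin n) ℝ) (hD : InClassD (DA A))
    {M : Finset (Sym2 (Fin n))} (hM : IsMaxMatching (DA A) M)
    {a b : Fin n} (hab : s(a, b) ∈ M) (ha : ¬ Pendant (DA A) a) : Pendant (DA A) b := by
  by_contra hb
  have hadj : Adjd (DA A) a b := by
    obtain ⟨i, j, heq, hij⟩ := hM.1.1 _ hab
    rcases Sym2.eq_iff.mp heq with ⟨h1, h2⟩ | ⟨h1, h2⟩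
    · subst h1; subst h2; exact hij
    · subst h1; subst h2; exact adjd_symm hij
  obtain ⟨p, hap, hp⟩ := hD.2 a ha
  obtain ⟨r, hbr, hr⟩ := hD.2 b hb
  have hpr : p ≠ r := by
    intro h; subst h
    exact hadj.1 (pend_unique hp (adjd_symm hap) (adjd_symm hbr))
  have hpa : p ≠ a := fun h => ha (h ▸ hp)
  have hpb : p ≠ b := fun h => hb (h ▸ hp)
  have hra : r ≠ a := fun h => ha (h ▸ hr)
  have hrb : r ≠ b := fun h => hb (h ▸ hr)
  have hpun : ∀ e ∈ M, p ∉ e := by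
    intro e he hpe
    obtain ⟨w, rfl, hw⟩ := edge_decomp (hM.1.1 e he) hpe
    have hwa : w = a := pend_unique hp hw (adjd_symm hap)
    rw [hwa] at he
    have := matching_unique hM.1 he hab (Sym2.mem_mk_right p a) (Sym2.mem_mk_left a b)
    rcases Sym2.mem_iff.mp (this ▸ Sym2.mem_mk_left p a) with h | h
    · exact hpa h
    · exact hpb h
  have hrun : ∀ e ∈ M, r ∉ e := by
    intro e he hre
    obtain ⟨w, rfl, hw⟩ := edge_decomp (hM.1.1 e he) hre
    have hwb : w = b := pend_unique hr hw (adjd_symm hbr)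
    rw [hwb] at he
    have := matching_unique hM.1 he hab (Sym2.mem_mk_right r b) (Sym2.mem_mk_right a b)
    rcases Sym2.mem_iff.mp (this ▸ Sym2.mem_mk_left r b) with h | h
    · exact hra h
    · exact hrb h
  -- vertices a and b appear in no edge of M.erase s(a,b)
  have haun : ∀ e ∈ M.erase s(a, b), a ∉ e := by
    intro e he hae
    have := matching_unique hM.1 (Finset.mem_of_mem_erase he) hab hae (Sym2.mem_mk_left a b)
    exact (Finset.ne_of_mem_erase he) this
  have hbun : ∀ e ∈ M.erase s(a, b), b ∉ e := by
    intro e he hbe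
    have := matching_unique hM.1 (Finset.mem_of_mem_erase he) hab hbe (Sym2.mem_mk_right a b)
    exact (Finset.ne_of_mem_erase he) this
  -- build the bigger matching
  have hM1 : IsMatching (DA A) (insert s(b, r) (M.erase s(a, b))) := by
    apply insert_matching ⟨fun e he => hM.1.1 e (Finset.mem_of_mem_erase he),
      fun e he f hf => hM.1.2 e (Finset.mem_of_mem_erase he) f (Finset.mem_of_mem_erase hf)⟩
      ⟨b, r, rfl, hbr⟩
    intro f hf u hu
    rcases Sym2.mem_iff.mp hu with rfl | rfl
    · exact hbun f hf
    · exact hrun f (Finset.mem_of_mem_erase hf)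
  have hM2 : IsMatching (DA A) (insert s(a, p) (insert s(b, r) (M.erase s(a, b)))) := by
    apply insert_matching hM1 ⟨a, p, rfl, hap⟩
    intro f hf u hu
    rcases Finset.mem_insert.mp hf with rfl | hf
    · rcases Sym2.mem_iff.mp hu with rfl | rfl
      · intro h
        rcases Sym2.mem_iff.mp h with h | h
        · exact hadj.1 h
        · exact hra h.symm
      · intro h
        rcases Sym2.mem_iff.mp h with h | h
        · exact hpb h
        · exact hpr h
    · rcases Sym2.mem_iff.mp hu with rfl | rfl
      · exact haun f hf
      · exact hpun f (Finset.mem_of_mem_erase hf)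
  -- cardinality contradiction
  have hc1 : s(b, r) ∉ M.erase s(a, b) := fun h => hbun _ h (Sym2.mem_mk_left b r)
  have hc2 : s(a, p) ∉ insert s(b, r) (M.erase s(a, b)) := by
    intro h
    rcases Finset.mem_insert.mp h with h | h
    · rcases Sym2.eq_iff.mp h with ⟨h3, -⟩ | ⟨h3, -⟩
      · exact hadj.1 h3
      · exact hra h3.symm
    · exact haun _ h (Sym2.mem_mk_left a p)
  have hcard := hM.2 _ hM2
  rw [Finset.card_insert_of_notMem hc2, Finset.card_insert_of_notMem hc1,
    Finset.card_erase_of_mem hab] at hcard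
  have hpos : 1 ≤ M.card := Finset.card_pos.mpr ⟨_, hab⟩
  omega

private lemma ppE_subset (A : Matrix (Fin n) (Fin n) ℝ) {M : Finset (Sym2 (Fin n))}
    (hM : IsMaxMatching (DA A) M) : ppE A ⊆ M := by
  intro e he
  obtain ⟨hedge, hpend⟩ := mem_ppE.mp he
  obtain ⟨a, b, rfl, hab⟩ := hedge
  have hpa : Pendant (DA A) a := hpend a (Sym2.mem_mk_left a b)
  have hpb : Pendant (DA A) b := hpend b (Sym2.mem_mk_right a b)
  by_contra hcon
  have haun : ∀ f ∈ M, a ∉ f := by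
    intro f hf haf
    obtain ⟨w, rfl, hw⟩ := edge_decomp (hM.1.1 f hf) haf
    have : w = b := pend_unique hpa hw hab
    rw [this] at hf; exact hcon hf
  have hbun : ∀ f ∈ M, b ∉ f := by
    intro f hf hbf
    obtain ⟨w, rfl, hw⟩ := edge_decomp (hM.1.1 f hf) hbf
    have : w = a := pend_unique hpb hw (adjd_symm hab)
    rw [this] at hf
    exact hcon (by rwa [Sym2.eq_swap] at hf)
  refine not_max_insert hM (fun h => haun _ h (Sym2.mem_mk_left a b))
    (insert_matching hM.1 ⟨a, b, rfl, hab⟩ ?_)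
  intro f hf u hu
  rcases Sym2.mem_iff.mp hu with rfl | rfl
  · exact haun f hf
  · exact hbun f hf

private lemma mate_exists (A : Matrix (Fin n) (Fin n) ℝ) (hD : InClassD (DA A))
    {M : Finset (Sym2 (Fin n))} (hM : IsMaxMatching (DA A) M)
    {v : Fin n} (hv : ¬ Pendant (DA A) v) :
    ∃ w, Pendant (DA A) w ∧ Adjd (DA A) v w ∧ s(v, w) ∈ M := by
  obtain ⟨e, he, hve⟩ := np_matched A hD hM hv
  obtain ⟨w, rfl, hw⟩ := edge_decomp (hM.1.1 e he) hve
  exact ⟨w, edge_has_pendant A hD hM he hv, hw, he⟩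

end MainProofC

section MainProofD
open scoped Classical

variable {n : ℕ}

private lemma mem_maxMatchings {A : Matrix (Fin n) (Fin n) ℝ} {M : Finset (Sym2 (Fin n))} :
    M ∈ maxMatchings A ↔ IsMaxMatching (DA A) M := by
  simp [maxMatchings]

theorem delta_eq (A : Matrix (Fin n) (Fin n) ℝ) (hD : InClassD (DA A)) :
    Delta A = (∏ v ∈ NPs A, wgt A v) * ∏ e ∈ ppE A, cycProd A e := by
  set Φ : (∀ a ∈ NPs A, Fin n) → Finset (Sym2 (Fin n)) := fun p =>
    ((NPs A).attach.image (fun v => s(v.1, p v.1 v.2))) ∪ ppE A with hΦ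
  set Ψ : Finset (Sym2 (Fin n)) → (∀ a ∈ NPs A, Fin n) := fun M v hv =>
    if h : ∃ w, Pendant (DA A) w ∧ Adjd (DA A) v w ∧ s(v, w) ∈ M then h.choose else v with hΨ
  have main : ∀ p ∈ (NPs A).pi (fun v => pendNbrs A v),
      IsMaxMatching (DA A) (Φ p) ∧
      (∀ e ∈ Φ p, ∀ u, ¬ Pendant (DA A) u → u ∈ e →
        ∃ hu : u ∈ NPs A, e = s(u, p u hu)) := by
    intro p hp
    rw [Finset.mem_pi] at hp
    have hpp : ∀ v (hv : v ∈ NPs A), Pendant (DA A) (p v hv) ∧ Adjd (DA A) v (p v hv) :=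
      fun v hv => mem_pendNbrs.mp (hp v hv)
    have hedge : ∀ e ∈ Φ p, IsEdge (DA A) e := by
      intro e he
      rcases Finset.mem_union.mp he with he | he
      · obtain ⟨v, -, rfl⟩ := Finset.mem_image.mp he
        exact ⟨v.1, p v.1 v.2, rfl, (hpp v.1 v.2).2⟩
      · exact (mem_ppE.mp he).1
    have hkey : ∀ e ∈ Φ p, ∀ u, ¬ Pendant (DA A) u → u ∈ e →
        ∃ hu : u ∈ NPs A, e = s(u, p u hu) := by
      intro e he u hu hue
      rcases Finset.mem_union.mp he with he | he
      · obtain ⟨v, -, rfl⟩ := Finset.mem_image.mp he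
        rcases Sym2.mem_iff.mp hue with h | h
        · subst h
          exact ⟨v.2, rfl⟩
        · exfalso
          have := (hpp v.1 v.2).1
          rw [← h] at this
          exact hu this
      · exact absurd ((mem_ppE.mp he).2 u hue) hu
    have hmatch : IsMatching (DA A) (Φ p) := by
      refine ⟨hedge, ?_⟩
      intro e he f hf hef u hue huf
      apply hef
      by_cases hu : Pendant (DA A) u
      · obtain ⟨w, hew, hw⟩ := edge_decomp (hedge e he) hue
        obtain ⟨w', hfw, hw'⟩ := edge_decomp (hedge f hf) huf
        rw [hew, hfw, pend_unique hu hw hw']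
      · obtain ⟨hu1, he1⟩ := hkey e he u hu hue
        obtain ⟨hu2, hf1⟩ := hkey f hf u hu huf
        rw [he1, hf1]
    have hinj : ∀ x ∈ (NPs A).attach, ∀ y ∈ (NPs A).attach,
        s(x.1, p x.1 x.2) = s(y.1, p y.1 y.2) → x = y := by
      intro v _ v' _ hvv'
      rcases Sym2.eq_iff.mp hvv' with ⟨h1, -⟩ | ⟨h1, h2⟩
      · exact Subtype.ext h1
      · exfalso
        have := (hpp v'.1 v'.2).1
        rw [← h1] at this
        exact mem_NPs.mp v.2 this
    have hdisjU : Disjoint ((NPs A).attach.image (fun v => s(v.1, p v.1 v.2))) (ppE A) := by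
      rw [Finset.disjoint_left]
      intro e he hppe
      obtain ⟨v, -, rfl⟩ := Finset.mem_image.mp he
      exact mem_NPs.mp v.2 ((mem_ppE.mp hppe).2 v.1 (Sym2.mem_mk_left _ _))
    have hcard : (Φ p).card = (NPs A).card + (ppE A).card := by
      rw [hΦ]
      simp only
      rw [Finset.card_union_of_disjoint hdisjU,
        Finset.card_image_of_injOn (fun x hx y hy h => hinj x hx y hy h),
        Finset.card_attach]
    exact ⟨⟨hmatch, fun M' hM' => hcard ▸ card_le_bound A hM'⟩, hkey⟩
  have hΨspec : ∀ M, IsMaxMatching (DA A) M → ∀ v (hv : v ∈ NPs A),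
      Pendant (DA A) (Ψ M v hv) ∧ Adjd (DA A) v (Ψ M v hv) ∧ s(v, Ψ M v hv) ∈ M := by
    intro M hM v hv
    have hex := mate_exists A hD hM (mem_NPs.mp hv)
    simp only [hΨ, dif_pos hex]
    exact hex.choose_spec
  have hΨmem : ∀ M ∈ maxMatchings A, Ψ M ∈ (NPs A).pi (fun v => pendNbrs A v) := by
    intro M hM0
    have hM := mem_maxMatchings.mp hM0
    rw [Finset.mem_pi]
    intro v hv
    exact mem_pendNbrs.mpr ⟨(hΨspec M hM v hv).1, (hΨspec M hM v hv).2.1⟩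
  have hleft : ∀ M ∈ maxMatchings A, Φ (Ψ M) = M := by
    intro M hM0
    have hM := mem_maxMatchings.mp hM0
    apply Finset.Subset.antisymm
    · intro e he
      rcases Finset.mem_union.mp he with he | he
      · obtain ⟨v, -, rfl⟩ := Finset.mem_image.mp he
        exact (hΨspec M hM v.1 v.2).2.2
      · exact ppE_subset A hM he
    · intro e he
      by_cases hall : ∀ u ∈ e, Pendant (DA A) u
      · exact Finset.mem_union_right _ (mem_ppE.mpr ⟨hM.1.1 e he, hall⟩)
      · push_neg at hall
        obtain ⟨u, hue, hu⟩ := hall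
        have huN : u ∈ NPs A := mem_NPs.mpr hu
        have he2 : s(u, Ψ M u huN) ∈ M := (hΨspec M hM u huN).2.2
        have heq : e = s(u, Ψ M u huN) :=
          matching_unique hM.1 he he2 hue (Sym2.mem_mk_left _ _)
        rw [heq]
        exact Finset.mem_union_left _
          (Finset.mem_image.mpr ⟨⟨u, huN⟩, Finset.mem_attach _ _, rfl⟩)
  have hright : ∀ p ∈ (NPs A).pi (fun v => pendNbrs A v), Ψ (Φ p) = p := by
    intro p hp
    have hkey := (main p hp).2
    have hpp : ∀ v (hv : v ∈ NPs A), Pendant (DA A) (p v hv) ∧ Adjd (DA A) v (p v hv) :=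
      fun v hv => mem_pendNbrs.mp (Finset.mem_pi.mp hp v hv)
    funext v hv
    have hmem : s(v, p v hv) ∈ Φ p :=
      Finset.mem_union_left _ (Finset.mem_image.mpr ⟨⟨v, hv⟩, Finset.mem_attach _ _, rfl⟩)
    have hex : ∃ w, Pendant (DA A) w ∧ Adjd (DA A) v w ∧ s(v, w) ∈ Φ p :=
      ⟨p v hv, (hpp v hv).1, (hpp v hv).2, hmem⟩
    simp only [hΨ, dif_pos hex]
    obtain ⟨hw1, hw2, hw3⟩ := hex.choose_spec
    obtain ⟨hu, heq⟩ := hkey _ hw3 v (mem_NPs.mp hv) (Sym2.mem_mk_left _ _)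
    rcases Sym2.eq_iff.mp heq with ⟨-, h2⟩ | ⟨h1, h2⟩
    · exact h2
    · exfalso
      have := (hpp v hu).1
      rw [← h1] at this
      exact mem_NPs.mp hv this
  have hsum : Delta A = ∑ p ∈ (NPs A).pi (fun v => pendNbrs A v), matchProd A (Φ p) := by
    simp only [Delta]
    refine Finset.sum_nbij' Ψ Φ hΨmem (fun p hp => mem_maxMatchings.mpr (main p hp).1)
      hleft hright ?_
    intro M hM0
    rw [hleft M hM0]
  rw [hsum]
  have hprodval : ∀ p ∈ (NPs A).pi (fun v => pendNbrs A v),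
      matchProd A (Φ p) =
      (∏ v ∈ (NPs A).attach, (A v.1 (p v.1 v.2) * A (p v.1 v.2) v.1)) *
        ∏ e ∈ ppE A, cycProd A e := by
    intro p hp
    have hpp : ∀ v (hv : v ∈ NPs A), Pendant (DA A) (p v hv) ∧ Adjd (DA A) v (p v hv) :=
      fun v hv => mem_pendNbrs.mp (Finset.mem_pi.mp hp v hv)
    have hinj : ∀ x ∈ (NPs A).attach, ∀ y ∈ (NPs A).attach,
        s(x.1, p x.1 x.2) = s(y.1, p y.1 y.2) → x = y := by
      intro v _ v' _ hvv'
      rcases Sym2.eq_iff.mp hvv' with ⟨h1, -⟩ | ⟨h1, h2⟩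
      · exact Subtype.ext h1
      · exfalso
        have := (hpp v'.1 v'.2).1
        rw [← h1] at this
        exact mem_NPs.mp v.2 this
    have hdisjU : Disjoint ((NPs A).attach.image (fun v => s(v.1, p v.1 v.2))) (ppE A) := by
      rw [Finset.disjoint_left]
      intro e he hppe
      obtain ⟨v, -, rfl⟩ := Finset.mem_image.mp he
      exact mem_NPs.mp v.2 ((mem_ppE.mp hppe).2 v.1 (Sym2.mem_mk_left _ _))
    simp only [matchProd, hΦ]
    rw [Finset.prod_union hdisjU, Finset.prod_image hinj]
    simp only [cycProd_mk]
  rw [Finset.sum_congr rfl hprodval, ← Finset.sum_mul]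
  congr 1
  simp only [wgt]
  exact Eq.symm (Finset.prod_sum (NPs A) (fun v => pendNbrs A v) (fun v q => A v q * A q v))

end MainProofD


section FinalAssembly
open scoped Classical

/-- Proposition: for `D(A) ∈ 𝒟` strongly connected, the group inverse `A^#` exists
iff `Δ_A ≠ 0`. -/
theorem group_inverse_exists_iff_delta_ne_zero {n : ℕ} (A : Matrix (Fin n) (Fin n) ℝ)
    (hD : InClassD (DA A)) (hSC : StronglyConnected (DA A)) :
    (∃ X, IsGroupInverse A X) ↔ Delta A ≠ 0 := by
  have hformula := delta_eq A hD
  have hC : (∏ e ∈ ppE A, cycProd A e) ≠ 0 := by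
    rw [Finset.prod_ne_zero_iff]
    intro e he
    obtain ⟨⟨a, b, rfl, hab⟩, -⟩ := mem_ppE.mp he
    rw [cycProd_mk]
    exact mul_ne_zero hab.2.1 hab.2.2
  rw [gi_iff_ker]
  constructor
  · intro h
    rw [hformula]
    apply mul_ne_zero ?_ hC
    rw [Finset.prod_ne_zero_iff]
    intro v hv
    by_contra hw0
    obtain ⟨u, hu1, hu2⟩ := exists_bad_vec A hD (mem_NPs.mp hv) hw0
    exact hu2 (h u hu1)
  · intro h
    apply kerSq_of_wgt A hD
    intro v hv
    rw [hformula] at h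
    exact Finset.prod_ne_zero_iff.mp (mul_ne_zero_iff.mp h).1 v hv

end FinalAssembly
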